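/- Let A be a bounded self-adjoint right linear operator on a right quaternionic Hilbert space. Then ‖A‖ = max{|m(A)|, |M(A)|}, where m(A) = inf_{‖φ‖=1} ⟨Aφ, φ⟩ and M(A) = sup_{‖φ‖=1} ⟨Aφ, φ⟩. -/

import Mathlib

set_option linter.unusedSectionVars false


noncomputable section

open MulOpposite

abbrev Quat := Quaternion ℝ

class RQH (V : Type*) [NormedAddCommGroup V] [Module Quatᵐᵒᵖ V] where
  inn : V → V → Quat
  conj_symm : ∀ φ ψ : V, star (inn φ ψ) = inn ψ φ
  add_right : ∀ φ ψ ω : V, inn φ (ψ + ω) = inn φ ψ + inn φ ω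
  smul_right : ∀ (φ ψ : V) (q : Quat), inn φ (op q • ψ) = inn φ ψ * q
  norm_sq : ∀ φ : V, inn φ φ = ((‖φ‖ ^ 2 : ℝ) : Quat)

open RQH

variable {V : Type*} [NormedAddCommGroup V] [Module Quatᵐᵒᵖ V] [CompleteSpace V] [RQH V]

def IsBddRL (A : V → V) : Prop :=
  (∀ x y : V, A (x + y) = A x + A y) ∧
  (∀ (q : Quatᵐᵒᵖ) (x : V), A (q • x) = q • A x) ∧
  (∃ C : ℝ, ∀ x : V, ‖A x‖ ≤ C * ‖x‖)

def IsSA (A : V → V) : Prop := ∀ φ ψ : V, inn (A φ) ψ = inn φ (A ψ)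

def IsPos (A : V → V) : Prop := ∀ φ : V, ∃ r : ℝ, 0 ≤ r ∧ inn (A φ) φ = (r : Quat)

def opN (A : V → V) : ℝ := sSup { r : ℝ | ∃ φ : V, ‖φ‖ = 1 ∧ r = ‖A φ‖ }

def mA (A : V → V) : ℝ := sInf { r : ℝ | ∃ φ : V, ‖φ‖ = 1 ∧ r = (inn (A φ) φ).re }

def MA (A : V → V) : ℝ := sSup { r : ℝ | ∃ φ : V, ‖φ‖ = 1 ∧ r = (inn (A φ) φ).re }

def Rq (A : V → V) (l : Quat) (ψ : V) : V :=
  A (A ψ) - op ((2 * l.re : ℝ) : Quat) • A ψ + op ((‖l‖ ^ 2 : ℝ) : Quat) • ψ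

def SInv (T : V → V) : Prop :=
  ∃ B : V → V, IsBddRL B ∧ (∀ x, T (B x) = x) ∧ (∀ x, B (T x) = x)

def sspec (A : V → V) : Set Quat := { l | ¬ SInv (Rq A l) }


-- quaternion helpers
lemma rqh8_coe_mul_re (t : ℝ) (q : Quat) : (((t : ℝ) : Quat) * q).re = t * q.re := by
  rw [Quaternion.coe_mul_eq_smul, Quaternion.re_smul]; rfl

lemma rqh8_mul_coe_re (t : ℝ) (q : Quat) : (q * ((t : ℝ) : Quat)).re = q.re * t := by
  rw [Quaternion.mul_coe_eq_smul, Quaternion.re_smul]; exact mul_comm t q.re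

-- inner product helpers
lemma rqh8_inn_zero_right (φ : V) : inn φ (0 : V) = 0 := by
  have h := add_right φ (0 : V) 0
  rw [add_zero] at h
  exact left_eq_add.mp h

lemma rqh8_inn_zero_left (ψ : V) : inn (0 : V) ψ = 0 := by
  rw [← conj_symm, rqh8_inn_zero_right, star_zero]

lemma rqh8_inn_add_left (φ ψ ω : V) : inn (φ + ψ) ω = inn φ ω + inn ψ ω := by
  rw [← conj_symm, add_right, star_add, conj_symm, conj_symm]

lemma rqh8_inn_neg_right (φ ψ : V) : inn φ (-ψ) = - inn φ ψ := by
  have h := add_right φ ψ (-ψ)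
  rw [add_neg_cancel, rqh8_inn_zero_right] at h
  exact (eq_neg_of_add_eq_zero_right h.symm)

lemma rqh8_inn_neg_left (φ ψ : V) : inn (-φ) ψ = - inn φ ψ := by
  rw [← conj_symm, rqh8_inn_neg_right, star_neg, conj_symm]

lemma rqh8_inn_sub_right (φ ψ ω : V) : inn φ (ψ - ω) = inn φ ψ - inn φ ω := by
  rw [sub_eq_add_neg, add_right, rqh8_inn_neg_right, sub_eq_add_neg]

lemma rqh8_inn_sub_left (φ ψ ω : V) : inn (φ - ψ) ω = inn φ ω - inn ψ ω := by
  rw [sub_eq_add_neg, rqh8_inn_add_left, rqh8_inn_neg_left, sub_eq_add_neg]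

lemma rqh8_inn_smul_left (q : Quat) (φ ψ : V) : inn (op q • φ) ψ = star q * inn φ ψ := by
  rw [← conj_symm, smul_right, star_mul, conj_symm]

lemma rqh8_re_symm (φ ψ : V) : (inn ψ φ).re = (inn φ ψ).re := by
  rw [← conj_symm φ ψ, Quaternion.re_star]

lemma rqh8_normsq (φ : V) : (inn φ φ).re = ‖φ‖ ^ 2 := by
  rw [norm_sq, Quaternion.re_coe]

lemma rqh8_norm_add_sq (x y : V) : ‖x + y‖ ^ 2 = ‖x‖ ^ 2 + 2 * (inn x y).re + ‖y‖ ^ 2 := by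
  have h : (inn (x + y) (x + y)).re = ‖x‖ ^ 2 + 2 * (inn x y).re + ‖y‖ ^ 2 := by
    rw [add_right, rqh8_inn_add_left, rqh8_inn_add_left]
    simp only [Quaternion.re_add]
    rw [rqh8_normsq, rqh8_normsq, rqh8_re_symm y x]
    ring
  rw [rqh8_normsq] at h
  linarith

lemma rqh8_norm_sub_sq (x y : V) : ‖x - y‖ ^ 2 = ‖x‖ ^ 2 - 2 * (inn x y).re + ‖y‖ ^ 2 := by
  have h := rqh8_norm_add_sq x (-y)
  rw [← sub_eq_add_neg, rqh8_inn_neg_right, norm_neg] at h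
  simp only [Quaternion.re_neg] at h
  linarith

lemma rqh8_norm_smul (q : Quat) (v : V) : ‖op q • v‖ = ‖q‖ * ‖v‖ := by
  have h1 : inn (op q • v) (op q • v) = star q * inn v v * q := by
    rw [smul_right, rqh8_inn_smul_left]
  have h2 : (‖op q • v‖ ^ 2 : ℝ) = (‖q‖ * ‖v‖) ^ 2 := by
    rw [← rqh8_normsq, h1, norm_sq]
    rw [← Quaternion.coe_commutes, mul_assoc, Quaternion.star_mul_self]
    rw [← Quaternion.coe_mul, Quaternion.re_coe, Quaternion.normSq_eq_norm_mul_self]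
    ring
  have h3 : ‖op q • v‖ = Real.sqrt ((‖q‖ * ‖v‖) ^ 2) := by
    rw [← h2, Real.sqrt_sq (norm_nonneg _)]
  rw [h3, Real.sqrt_sq (by positivity)]

lemma rqh8_abs_re_le (φ ψ : V) : |(inn φ ψ).re| ≤ ‖φ‖ * ‖ψ‖ := by
  rcases eq_or_ne φ 0 with rfl | h
  · simp [rqh8_inn_zero_left, Quaternion.re_zero]
  · have ha : 0 < ‖φ‖ := norm_pos_iff.mpr h
    have ha2 : 0 < ‖φ‖ ^ 2 := by positivity
    set b := (inn φ ψ).re with hb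
    have key : ∀ t : ℝ, 0 ≤ ‖φ‖ ^ 2 * t ^ 2 - 2 * b * t + ‖ψ‖ ^ 2 := by
      intro t
      have h0 : (0 : ℝ) ≤ ‖op ((t : ℝ) : Quat) • φ - ψ‖ ^ 2 := sq_nonneg _
      rw [rqh8_norm_sub_sq, rqh8_norm_smul, Quaternion.norm_coe, rqh8_inn_smul_left,
        Quaternion.star_coe, rqh8_coe_mul_re, Real.norm_eq_abs, mul_pow, sq_abs] at h0
      linarith [h0]
    have hd := key (b / ‖φ‖ ^ 2)
    have h1 : ‖φ‖ ^ 2 * (b / ‖φ‖ ^ 2) ^ 2 - 2 * b * (b / ‖φ‖ ^ 2) + ‖ψ‖ ^ 2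
        = ‖ψ‖ ^ 2 - b ^ 2 / ‖φ‖ ^ 2 := by
      field_simp; ring
    rw [h1] at hd
    have h2 : b ^ 2 / ‖φ‖ ^ 2 ≤ ‖ψ‖ ^ 2 := by linarith
    rw [div_le_iff₀ ha2] at h2
    have hp : 0 ≤ ‖φ‖ * ‖ψ‖ := by positivity
    have hb2 : b ^ 2 ≤ (‖φ‖ * ‖ψ‖) ^ 2 := by nlinarith
    have := abs_le_of_sq_le_sq' hb2 hp
    exact abs_le.mpr this

lemma rqh8_A_zero (A : V → V) (h : ∀ x y : V, A (x + y) = A x + A y) : A 0 = 0 := by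
  have h1 := h 0 0
  rw [add_zero] at h1
  exact left_eq_add.mp h1

lemma rqh8_A_neg (A : V → V) (h : ∀ x y : V, A (x + y) = A x + A y) (x : V) :
    A (-x) = - A x := by
  have h1 := h x (-x)
  rw [add_neg_cancel, rqh8_A_zero A h] at h1
  exact eq_neg_of_add_eq_zero_right h1.symm

lemma rqh8_A_sub (A : V → V) (h : ∀ x y : V, A (x + y) = A x + A y) (x y : V) :
    A (x - y) = A x - A y := by
  rw [sub_eq_add_neg, h, rqh8_A_neg A h, sub_eq_add_neg]


theorem stmt8' [Nontrivial V] (A : V → V) (hA : IsBddRL A) (hsa : ∀ φ ψ : V, inn (A φ) ψ = inn φ (A ψ)) :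
    sSup { r : ℝ | ∃ φ : V, ‖φ‖ = 1 ∧ r = ‖A φ‖ }
      = max |sInf { r : ℝ | ∃ φ : V, ‖φ‖ = 1 ∧ r = (inn (A φ) φ).re }|
            |sSup { r : ℝ | ∃ φ : V, ‖φ‖ = 1 ∧ r = (inn (A φ) φ).re }| := by
  obtain ⟨haddA, hsmulA, C, hC⟩ := hA
  obtain ⟨v, hv⟩ := exists_ne (0 : V)
  have hvn : ‖v‖ ≠ 0 := norm_ne_zero_iff.mpr hv
  set u : V := op ((‖v‖⁻¹ : ℝ) : Quat) • v with hu_def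
  have hu : ‖u‖ = 1 := by
    rw [hu_def, rqh8_norm_smul, Quaternion.norm_coe, norm_inv, norm_norm]
    exact inv_mul_cancel₀ hvn
  set S : Set ℝ := { r : ℝ | ∃ φ : V, ‖φ‖ = 1 ∧ r = (inn (A φ) φ).re } with hS
  set T : Set ℝ := { r : ℝ | ∃ φ : V, ‖φ‖ = 1 ∧ r = ‖A φ‖ } with hT
  have hSne : S.Nonempty := ⟨(inn (A u) u).re, u, hu, rfl⟩
  have hTne : T.Nonempty := ⟨‖A u‖, u, hu, rfl⟩
  have hTbdd : BddAbove T := by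
    refine ⟨C, ?_⟩
    rintro r ⟨φ, hφ, rfl⟩
    have := hC φ
    rwa [hφ, mul_one] at this
  have habs : ∀ r ∈ S, |r| ≤ C := by
    rintro r ⟨φ, hφ, rfl⟩
    have h1 := rqh8_abs_re_le (A φ) φ
    have h2 := hC φ
    rw [hφ, mul_one] at h1 h2
    linarith
  have hSbddA : BddAbove S := ⟨C, fun r hr => (abs_le.mp (habs r hr)).2⟩
  have hSbddB : BddBelow S := ⟨-C, fun r hr => (abs_le.mp (habs r hr)).1⟩
  set N : ℝ := max |sInf S| |sSup S| with hN
  have hN0 : (0 : ℝ) ≤ N := le_trans (abs_nonneg _) (le_max_left _ _)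
  have hSN : ∀ r ∈ S, |r| ≤ N := by
    intro r hr
    have h1 : r ≤ sSup S := le_csSup hSbddA hr
    have h2 : sInf S ≤ r := csInf_le hSbddB hr
    have h3 : |sSup S| ≤ N := le_max_right _ _
    have h4 : |sInf S| ≤ N := le_max_left _ _
    rw [abs_le]
    constructor
    · linarith [neg_abs_le (sInf S)]
    · linarith [le_abs_self (sSup S)]
  have hquad : ∀ z : V, |(inn (A z) z).re| ≤ N * ‖z‖ ^ 2 := by
    intro z
    rcases eq_or_ne z 0 with rfl | hz
    · simp [rqh8_A_zero A haddA, rqh8_inn_zero_left, Quaternion.re_zero]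
    · have hzn : ‖z‖ ≠ 0 := norm_ne_zero_iff.mpr hz
      set w : V := op ((‖z‖⁻¹ : ℝ) : Quat) • z with hw
      have hwn : ‖w‖ = 1 := by
        rw [hw, rqh8_norm_smul, Quaternion.norm_coe, norm_inv, norm_norm]
        exact inv_mul_cancel₀ hzn
      have h1 : |(inn (A w) w).re| ≤ N := hSN _ ⟨w, hwn, rfl⟩
      have h2 : (inn (A w) w).re = ‖z‖⁻¹ ^ 2 * (inn (A z) z).re := by
        rw [hw, hsmulA, rqh8_inn_smul_left, smul_right, Quaternion.star_coe,
          rqh8_coe_mul_re, rqh8_mul_coe_re]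
        ring
      have h3 : (inn (A z) z).re = ‖z‖ ^ 2 * (inn (A w) w).re := by
        rw [h2]
        field_simp
      rw [h3, abs_mul, abs_of_nonneg (sq_nonneg ‖z‖)]
      calc ‖z‖ ^ 2 * |(inn (A w) w).re| ≤ ‖z‖ ^ 2 * N :=
            mul_le_mul_of_nonneg_left h1 (sq_nonneg _)
        _ = N * ‖z‖ ^ 2 := mul_comm _ _
  have hkey : ∀ φ : V, ‖φ‖ = 1 → ‖A φ‖ ≤ N := by
    intro φ hφ
    rcases eq_or_ne (‖A φ‖) 0 with h0 | h0
    · rw [h0]; exact hN0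
    · set y : V := op ((‖A φ‖⁻¹ : ℝ) : Quat) • (A φ) with hy
      have hyn : ‖y‖ = 1 := by
        rw [hy, rqh8_norm_smul, Quaternion.norm_coe, norm_inv, norm_norm]
        exact inv_mul_cancel₀ h0
      have hip : (inn (A φ) y).re = ‖A φ‖ := by
        rw [hy, smul_right, norm_sq, ← Quaternion.coe_mul, Quaternion.re_coe]
        field_simp
      have hAy : (inn (A y) φ).re = (inn (A φ) y).re := by
        rw [hsa y φ]
        exact (rqh8_re_symm y (A φ)).symm
      have e1 : (inn (A (φ + y)) (φ + y)).re
          = (inn (A φ) φ).re + (inn (A φ) y).re + (inn (A y) φ).re + (inn (A y) y).re := by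
        rw [haddA, rqh8_inn_add_left, add_right, add_right]
        simp only [Quaternion.re_add]
        ring
      have e2 : (inn (A (φ - y)) (φ - y)).re
          = (inn (A φ) φ).re - (inn (A φ) y).re - (inn (A y) φ).re + (inn (A y) y).re := by
        rw [rqh8_A_sub A haddA, rqh8_inn_sub_left, rqh8_inn_sub_right, rqh8_inn_sub_right]
        simp only [Quaternion.re_sub]
        ring
      have hb1 : (inn (A (φ + y)) (φ + y)).re ≤ N * ‖φ + y‖ ^ 2 :=
        le_trans (le_abs_self _) (hquad _)
      have hb2 : -(N * ‖φ - y‖ ^ 2) ≤ (inn (A (φ - y)) (φ - y)).re :=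
        (abs_le.mp (hquad (φ - y))).1
      have hpar : ‖φ + y‖ ^ 2 + ‖φ - y‖ ^ 2 = 4 := by
        rw [rqh8_norm_add_sq, rqh8_norm_sub_sq, hφ, hyn]
        ring
      have h5 : N * ‖φ + y‖ ^ 2 + N * ‖φ - y‖ ^ 2 = 4 * N := by
        rw [← mul_add, hpar]
        ring
      linarith
  apply le_antisymm
  · apply csSup_le hTne
    rintro r ⟨φ, hφ, rfl⟩
    exact hkey φ hφ
  · have hST : ∀ r ∈ S, |r| ≤ sSup T := by
      rintro r ⟨φ, hφ, rfl⟩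
      have h1 := rqh8_abs_re_le (A φ) φ
      rw [hφ, mul_one] at h1
      exact le_trans h1 (le_csSup hTbdd ⟨φ, hφ, rfl⟩)
    obtain ⟨r0, hr0⟩ := hSne
    have hMle : |sSup S| ≤ sSup T := by
      rw [abs_le]
      constructor
      · linarith [(abs_le.mp (hST r0 hr0)).1, le_csSup hSbddA hr0]
      · exact csSup_le ⟨r0, hr0⟩ (fun r hr => (abs_le.mp (hST r hr)).2)
    have hmle : |sInf S| ≤ sSup T := by
      rw [abs_le]
      constructor
      · exact le_csInf ⟨r0, hr0⟩ (fun r hr => (abs_le.mp (hST r hr)).1)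
      · linarith [(abs_le.mp (hST r0 hr0)).2, csInf_le hSbddB hr0]
    exact max_le hmle hMle

/-- ‖A‖ = max {|m(A)|, |M(A)|} for a bounded self-adjoint operator. -/
theorem stmt8 [Nontrivial V] (A : V → V) (hA : IsBddRL A) (hsa : IsSA A) :
    opN A = max |mA A| |MA A| :=
  stmt8' A hA hsa
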